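/- Let n ≥ 2 be an integer and d > 1, and let p : (0,∞) × (0,∞) → [0,∞) be measurable with p(η,t) ≤ d g_n(η,t) for all η, t > 0 and ∫_0^∞ p(η,t) dη ≤ 1 for all t > 0. Then for every closed set F ⊆ ℝ, limsup_{t→∞} (1/t) · log ( ∫_{{η > 0 : η/t ∈ F}} p(η,t) dη ) ≤ −inf_{x ∈ F} I_1(x), where I_1(x) := (x−(n−1))²/4 for x ≥ 0 and I_1(x) := +∞ for x < 0. -/

import Mathlib

open MeasureTheory Real Filter

/-- The Davies–Mandouvalos comparison function `g_n(η,t)` for the radial density of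
hyperbolic Brownian motion on the `n`-dimensional Poincaré half-space. -/
noncomputable def hypg (n : ℕ) (η t : ℝ) : ℝ :=
  t ^ (-(n : ℝ) / 2) * (η / (1 + η)) ^ (n - 1) *
    Real.exp (-(η - ((n : ℝ) - 1) * t) ^ 2 / (4 * t)) *
    (1 + η + t) ^ (((n : ℝ) - 3) / 2) * (1 + η)

/-- The rate function `I₁` of the LDP for the radial component of hyperbolic Brownian
motion: `I₁(x) = (x-(n-1))²/4` for `x ≥ 0` and `I₁(x) = ∞` for `x < 0`. -/
noncomputable def I₁ (n : ℕ) (x : ℝ) : EReal :=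
  if 0 ≤ x then (((x - ((n : ℝ) - 1)) ^ 2 / 4 : ℝ) : EReal) else ⊤

private lemma hypg_bound (n : ℕ) (η t : ℝ) (hη : 0 < η) (ht : 1 ≤ t) :
    hypg n η t ≤ (1+η)^(n+1) * ((1+t)^n *
      Real.exp (-(η - ((n : ℝ) - 1) * t) ^ 2 / (4 * t))) := by
  have hn0 : (0:ℝ) ≤ (n:ℝ) := n.cast_nonneg
  have h1 : t ^ (-(n:ℝ)/2) ≤ 1 :=
    Real.rpow_le_one_of_one_le_of_nonpos ht (by linarith)
  have h2 : (η/(1+η))^(n-1) ≤ 1 := by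
    apply pow_le_one₀ (by positivity)
    rw [div_le_one (by linarith)]; linarith
  have h3 : (1+η+t) ^ (((n:ℝ)-3)/2) ≤ (1+η)^n * (1+t)^n := by
    calc (1+η+t) ^ (((n:ℝ)-3)/2) ≤ (1+η+t) ^ ((n:ℝ)) :=
          Real.rpow_le_rpow_of_exponent_le (by linarith) (by linarith)
      _ = (1+η+t)^n := Real.rpow_natCast _ n
      _ ≤ ((1+η)*(1+t))^n := by gcongr <;> nlinarith
      _ = (1+η)^n*(1+t)^n := mul_pow _ _ _
  have key : hypg n η t ≤ 1 * 1 *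
      Real.exp (-(η - ((n : ℝ) - 1) * t) ^ 2 / (4 * t)) * ((1+η)^n * (1+t)^n) * (1+η) := by
    unfold hypg
    have e0 : (0:ℝ) ≤ Real.exp (-(η - ((n : ℝ) - 1) * t) ^ 2 / (4 * t)) := (Real.exp_pos _).le
    gcongr
  calc hypg n η t ≤ _ := key
    _ = (1+η)^(n+1) * ((1+t)^n * Real.exp (-(η - ((n : ℝ) - 1) * t) ^ 2 / (4 * t))) := by
        rw [pow_succ]; ring

private lemma poly_le_exp (k : ℕ) (M η : ℝ) (hM : 1 ≤ M) (hη : 0 ≤ η) :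
    (1+η)^k ≤ M^k * Real.exp ((k:ℝ) * (η/M)) := by
  have hM0 : (0:ℝ) < M := by linarith
  have h2 : η/M + 1 ≤ Real.exp (η/M) := Real.add_one_le_exp _
  have h1 : 1 + η ≤ M * Real.exp (η/M) := by
    have h3 := mul_le_mul_of_nonneg_left h2 hM0.le
    have h4 : M * (η/M) = η := by field_simp
    nlinarith
  calc (1+η)^k ≤ (M * Real.exp (η/M))^k := by gcongr
    _ = M^k * Real.exp (η/M)^k := mul_pow _ _ _
    _ = M^k * Real.exp ((k:ℝ)*(η/M)) := by rw [← Real.exp_nat_mul]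

private lemma lintegral_gauss (c m : ℝ) (hc : 0 < c) :
    ∫⁻ η : ℝ, ENNReal.ofReal (Real.exp (-(c * (η - m)^2))) = ENNReal.ofReal (Real.sqrt (π / c)) := by
  have hint : Integrable (fun η : ℝ => Real.exp (-(c * (η - m)^2))) := by
    have := (integrable_exp_neg_mul_sq hc).comp_sub_right m
    simpa [neg_mul] using this
  rw [← ofReal_integral_eq_lintegral_ofReal hint
    (Filter.Eventually.of_forall fun x => (Real.exp_pos _).le)]
  congr 1
  have h : ∫ η : ℝ, Real.exp (-(c*(η-m)^2)) = ∫ η : ℝ, Real.exp (-c*η^2) := by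
    have := integral_sub_right_eq_self (μ := volume) (fun η : ℝ => Real.exp (-c*η^2)) m
    simpa [neg_mul] using this
  rw [h, integral_gaussian]

private lemma key_bound (n : ℕ) (hn : 2 ≤ n) (d : ℝ) (hd : 1 < d)
    (p : ℝ → ℝ → ℝ)
    (hp_le : ∀ η t : ℝ, 0 < η → 0 < t → p η t ≤ d * hypg n η t)
    (F : Set ℝ) (hF : IsClosed F)
    (I ε t : ℝ) (hI : 0 ≤ I) (hε : 0 < ε) (hε1 : ε ≤ 1) (ht : 1 ≤ t)
    (hq : ∀ η : ℝ, 0 < η → η / t ∈ F → t * I ≤ (η - ((n:ℝ)-1)*t)^2/(4*t)) :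
    (∫⁻ η in {η : ℝ | 0 < η ∧ η / t ∈ F}, ENNReal.ofReal (p η t)) ≤
      ENNReal.ofReal ((d * (((n:ℝ)+1)/ε)^(n+1) * (1+t)^n *
        Real.exp ((ε*(n:ℝ) - (1-ε)*I) * t)) * Real.sqrt (π / (ε/(4*t)))) := by
  have ht0 : (0:ℝ) < t := lt_of_lt_of_le one_pos ht
  have hn0 : (2:ℝ) ≤ (n:ℝ) := by exact_mod_cast hn
  set M : ℝ := ((n:ℝ)+1)/ε with hMdef
  have hM : 1 ≤ M := by
    rw [hMdef, le_div_iff₀ hε]; linarith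
  set c : ℝ := ε/(4*t) with hcdef
  have hc : 0 < c := by positivity
  set m : ℝ := ((n:ℝ)-1)*t + 2*t with hmdef
  set K : ℝ := d * M^(n+1) * (1+t)^n * Real.exp ((ε*(n:ℝ) - (1-ε)*I) * t) with hKdef
  have hK0 : 0 ≤ K := by positivity
  have hS : MeasurableSet {η : ℝ | 0 < η ∧ η / t ∈ F} := by
    have : {η : ℝ | 0 < η ∧ η / t ∈ F} = Set.Ioi 0 ∩ (fun η : ℝ => η/t) ⁻¹' F := rfl
    rw [this]
    exact measurableSet_Ioi.inter (hF.measurableSet.preimage (measurable_id.div_const t))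
  -- pointwise bound
  have hpt : ∀ η ∈ {η : ℝ | 0 < η ∧ η / t ∈ F},
      p η t ≤ K * Real.exp (-(c * (η - m)^2)) := by
    rintro η ⟨hη0, hηF⟩
    have hqI := hq η hη0 hηF
    have hq0 : 0 ≤ (η - ((n:ℝ)-1)*t)^2/(4*t) := by positivity
    have hcast : ((n+1:ℕ):ℝ) * (η/M) = ε*η := by
      push_cast [hMdef]; field_simp
    have hexp1 : Real.exp (-(η - ((n:ℝ)-1)*t)^2/(4*t)) ≤
        Real.exp (-(1-ε)*(t*I)) * Real.exp (-(ε*((η - ((n:ℝ)-1)*t)^2/(4*t)))) := by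
      rw [← Real.exp_add]
      apply Real.exp_le_exp.2
      have h1ε : (0:ℝ) ≤ 1-ε := by linarith
      have := mul_le_mul_of_nonneg_left hqI h1ε
      have heq : -(η - ((n:ℝ)-1)*t)^2/(4*t)
          = -((1-ε)*((η - ((n:ℝ)-1)*t)^2/(4*t))) - ε*((η - ((n:ℝ)-1)*t)^2/(4*t)) := by ring
      rw [heq]; linarith
    calc p η t ≤ d * hypg n η t := hp_le η t hη0 ht0
      _ ≤ d * ((1+η)^(n+1) * ((1+t)^n *
            Real.exp (-(η - ((n : ℝ) - 1) * t) ^ 2 / (4 * t)))) := by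
          have := hypg_bound n η t hη0 ht
          exact mul_le_mul_of_nonneg_left this (by linarith)
      _ ≤ d * ((M^(n+1) * Real.exp (((n+1:ℕ):ℝ) * (η/M))) * ((1+t)^n *
            Real.exp (-(η - ((n : ℝ) - 1) * t) ^ 2 / (4 * t)))) := by
          gcongr
          exact poly_le_exp (n+1) M η hM hη0.le
      _ = d * M^(n+1) * (1+t)^n * Real.exp (ε*η) *
            Real.exp (-(η - ((n : ℝ) - 1) * t) ^ 2 / (4 * t)) := by
          rw [hcast]; ring
      _ ≤ d * M^(n+1) * (1+t)^n * Real.exp (ε*η) *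
            (Real.exp (-(1-ε)*(t*I)) * Real.exp (-(ε*((η - ((n:ℝ)-1)*t)^2/(4*t))))) := by
          gcongr
      _ = d * M^(n+1) * (1+t)^n *
            (Real.exp (ε*η) * (Real.exp (-(1-ε)*(t*I)) *
              Real.exp (-(ε*((η - ((n:ℝ)-1)*t)^2/(4*t)))))) := by ring
      _ = K * Real.exp (-(c * (η - m)^2)) := by
          rw [← Real.exp_add, ← Real.exp_add, hKdef,
            show d * M ^ (n + 1) * (1 + t) ^ n * rexp ((ε * ↑n - (1 - ε) * I) * t) *
              rexp (-(c * (η - m) ^ 2))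
              = d * (M ^ (n + 1) * ((1 + t) ^ n *
                (rexp ((ε * ↑n - (1 - ε) * I) * t) * rexp (-(c * (η - m) ^ 2))))) from by ring,
            ← Real.exp_add]
          have hid : ε * η + (-(1 - ε) * (t * I) + -(ε * ((η - (↑n - 1) * t) ^ 2 / (4 * t))))
              = (ε * ↑n - (1 - ε) * I) * t + -(c * (η - m) ^ 2) := by
            rw [hcdef, hmdef]; field_simp; ring
          rw [hid]; ring
  calc (∫⁻ η in {η : ℝ | 0 < η ∧ η / t ∈ F}, ENNReal.ofReal (p η t))
      ≤ ∫⁻ η in {η : ℝ | 0 < η ∧ η / t ∈ F},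
          ENNReal.ofReal (K * Real.exp (-(c * (η - m)^2))) :=
        setLIntegral_mono' hS (fun η hη => ENNReal.ofReal_le_ofReal (hpt η hη))
    _ ≤ ∫⁻ η : ℝ, ENNReal.ofReal (K * Real.exp (-(c * (η - m)^2))) :=
        setLIntegral_le_lintegral _ _
    _ = ENNReal.ofReal K * ∫⁻ η : ℝ, ENNReal.ofReal (Real.exp (-(c * (η - m)^2))) := by
        simp_rw [ENNReal.ofReal_mul hK0]
        exact lintegral_const_mul' _ _ ENNReal.ofReal_ne_top
    _ = ENNReal.ofReal K * ENNReal.ofReal (Real.sqrt (π / c)) := by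
        rw [lintegral_gauss c m hc]
    _ = ENNReal.ofReal (K * Real.sqrt (π / c)) := (ENNReal.ofReal_mul hK0).symm
    _ = _ := by rw [hKdef]

private lemma log_tendsto (C' α : ℝ) (hC' : 0 < C') (nn : ℕ) :
    Tendsto (fun t : ℝ => t⁻¹ *
      Real.log (C' * ((1+t)^nn * (Real.sqrt t * Real.exp (α*t))))) atTop (nhds α) := by
  have l1 : Tendsto (fun t:ℝ => Real.log t / t) atTop (nhds 0) :=
    Real.isLittleO_log_id_atTop.tendsto_div_nhds_zero
  have l2 : Tendsto (fun t:ℝ => Real.log (1+t) / t) atTop (nhds 0) := by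
    have h12 : Tendsto (fun t:ℝ => Real.log (1+t)/(1+t)) atTop (nhds 0) :=
      l1.comp (tendsto_atTop_add_const_left _ 1 tendsto_id)
    have h13 : Tendsto (fun t:ℝ => (1+t)/t) atTop (nhds 1) := by
      have h := (tendsto_inv_atTop_zero :
        Tendsto (fun t:ℝ => t⁻¹) atTop (nhds 0)).add (tendsto_const_nhds (x := (1:ℝ)))
      rw [zero_add] at h
      apply h.congr'
      filter_upwards [eventually_ge_atTop (1:ℝ)] with t ht
      have ht0 : t ≠ 0 := by positivity
      field_simp
    have := h12.mul h13
    rw [zero_mul] at this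
    apply this.congr'
    filter_upwards [eventually_ge_atTop (1:ℝ)] with t ht
    have ht0 : t ≠ 0 := by positivity
    have ht1 : (1+t) ≠ 0 := by positivity
    field_simp
  have l4 : Tendsto (fun t:ℝ => t⁻¹) atTop (nhds 0) := tendsto_inv_atTop_zero
  have main : Tendsto (fun t : ℝ => Real.log C' * t⁻¹ +
      ((nn:ℝ) * (Real.log (1+t)/t) + ((Real.log t/t)/2 + α))) atTop
      (nhds (Real.log C' * 0 + ((nn:ℝ)*0 + (0/2 + α)))) :=
    ((l4.const_mul _).add ((l2.const_mul _).add ((l1.div_const 2).add tendsto_const_nhds)))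
  have : Real.log C' * 0 + ((nn:ℝ)*0 + (0/2 + α)) = α := by ring
  rw [this] at main
  apply main.congr'
  filter_upwards [eventually_ge_atTop (1:ℝ)] with t ht
  have ht0 : (0:ℝ) < t := by positivity
  have h1 : (0:ℝ) < 1 + t := by linarith
  have hs : Real.sqrt t ≠ 0 := by positivity
  rw [Real.log_mul (ne_of_gt hC') (by positivity), Real.log_mul (by positivity) (by positivity),
    Real.log_mul hs (Real.exp_ne_zero _), Real.log_pow, Real.log_exp, Real.log_sqrt ht0.le]
  field_simp

private lemma master (n : ℕ) (hn : 2 ≤ n) (d : ℝ) (hd : 1 < d)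
    (p : ℝ → ℝ → ℝ)
    (hp_le : ∀ η t : ℝ, 0 < η → 0 < t → p η t ≤ d * hypg n η t)
    (F : Set ℝ) (hF : IsClosed F) (I ε : ℝ) (hI : 0 ≤ I) (hε : 0 < ε) (hε1 : ε ≤ 1)
    (hq : ∀ t : ℝ, 1 ≤ t → ∀ η : ℝ, 0 < η → η / t ∈ F → t * I ≤ (η - ((n:ℝ)-1)*t)^2/(4*t)) :
    Filter.limsup (fun t : ℝ => ((t⁻¹ : ℝ) : EReal) *
        ENNReal.log (∫⁻ η in {η : ℝ | 0 < η ∧ η / t ∈ F}, ENNReal.ofReal (p η t)))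
      Filter.atTop ≤ ((ε*(n:ℝ) - (1-ε)*I : ℝ) : EReal) := by
  have hd0 : (0:ℝ) < d := by linarith
  set α : ℝ := ε*(n:ℝ) - (1-ε)*I with hα
  set M : ℝ := ((n:ℝ)+1)/ε with hM
  have hM0 : 0 < M := by positivity
  set B : ℝ → ℝ := fun t => (d * M^(n+1) * (1+t)^n * Real.exp (α * t)) *
    Real.sqrt (π / (ε/(4*t))) with hB
  set C' : ℝ := d * M^(n+1) * Real.sqrt (4*π/ε) with hC'
  have hC'0 : 0 < C' := by
    rw [hC']
    have : (0:ℝ) < 4*π/ε := by positivity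
    positivity
  have hBeq : ∀ t : ℝ, 1 ≤ t → B t = C' * ((1+t)^n * (Real.sqrt t * Real.exp (α*t))) := by
    intro t ht
    have ht0 : (0:ℝ) < t := by positivity
    have h1 : π / (ε/(4*t)) = (4*π/ε)*t := by field_simp
    show (d * M^(n+1) * (1+t)^n * Real.exp (α * t)) * Real.sqrt (π / (ε/(4*t))) = _
    rw [hC', h1, Real.sqrt_mul (by positivity) t]
    ring
  have hBpos : ∀ t : ℝ, 1 ≤ t → 0 < B t := by
    intro t ht
    have ht0 : (0:ℝ) < t := by positivity
    rw [hBeq t ht]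
    have : (0:ℝ) < Real.sqrt t := Real.sqrt_pos.2 ht0
    positivity
  have hT : Tendsto (fun t : ℝ => t⁻¹ * Real.log (B t)) atTop (nhds α) := by
    apply (log_tendsto C' α hC'0 n).congr'
    filter_upwards [eventually_ge_atTop (1:ℝ)] with t ht
    rw [hBeq t ht]
  have hev : ∀ᶠ t : ℝ in atTop, ((t⁻¹ : ℝ) : EReal) *
      ENNReal.log (∫⁻ η in {η : ℝ | 0 < η ∧ η / t ∈ F}, ENNReal.ofReal (p η t)) ≤
      ((t⁻¹ * Real.log (B t) : ℝ) : EReal) := by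
    filter_upwards [eventually_ge_atTop (1:ℝ)] with t ht
    have ht0 : (0:ℝ) < t := by positivity
    have hb := key_bound n hn d hd p hp_le F hF I ε t hI hε hε1 ht (hq t ht)
    have hlog : ENNReal.log (∫⁻ η in {η : ℝ | 0 < η ∧ η / t ∈ F}, ENNReal.ofReal (p η t)) ≤
        (Real.log (B t) : EReal) := by
      refine le_trans (ENNReal.log_monotone hb) ?_
      rw [show ((d * (((n:ℝ)+1)/ε)^(n+1) * (1+t)^n *
        Real.exp ((ε*(n:ℝ) - (1-ε)*I) * t)) * Real.sqrt (π / (ε/(4*t)))) = B t from rfl]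
      rw [ENNReal.log_ofReal, if_neg (not_le.2 (hBpos t ht))]
    calc ((t⁻¹ : ℝ) : EReal) * ENNReal.log (∫⁻ η in {η : ℝ | 0 < η ∧ η / t ∈ F},
            ENNReal.ofReal (p η t))
        ≤ ((t⁻¹ : ℝ) : EReal) * (Real.log (B t) : EReal) := by
          apply mul_le_mul_of_nonneg_left hlog
          exact_mod_cast (inv_nonneg.2 ht0.le : (0:ℝ) ≤ t⁻¹)
      _ = ((t⁻¹ * Real.log (B t) : ℝ) : EReal) := (EReal.coe_mul _ _).symm
  calc Filter.limsup (fun t : ℝ => ((t⁻¹ : ℝ) : EReal) *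
        ENNReal.log (∫⁻ η in {η : ℝ | 0 < η ∧ η / t ∈ F}, ENNReal.ofReal (p η t))) atTop
      ≤ Filter.limsup (fun t : ℝ => ((t⁻¹ * Real.log (B t) : ℝ) : EReal)) atTop :=
        limsup_le_limsup hev
    _ = ((α : ℝ) : EReal) := (EReal.tendsto_coe.2 hT).limsup_eq

/-- Large deviation upper bound for closed sets for the radial component of hyperbolic
Brownian motion: for every closed `F`,
`limsup_{t→∞} (1/t) log P(D_n(t)/t ∈ F) ≤ -inf_{x ∈ F} I₁(x)`. -/
theorem ldp_upper_bound (n : ℕ) (hn : 2 ≤ n) (d : ℝ) (hd : 1 < d)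
    (p : ℝ → ℝ → ℝ) (hp : Measurable (Function.uncurry p))
    (hp_nonneg : ∀ η t : ℝ, 0 < η → 0 < t → 0 ≤ p η t)
    (hp_le : ∀ η t : ℝ, 0 < η → 0 < t → p η t ≤ d * hypg n η t)
    (hp_prob : ∀ t : ℝ, 0 < t → ∫⁻ η in Set.Ioi (0 : ℝ), ENNReal.ofReal (p η t) ≤ 1)
    (F : Set ℝ) (hF : IsClosed F) :
    Filter.limsup
        (fun t : ℝ => ((t⁻¹ : ℝ) : EReal) *
          ENNReal.log (∫⁻ η in {η : ℝ | 0 < η ∧ η / t ∈ F}, ENNReal.ofReal (p η t)))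
        Filter.atTop ≤
      -(⨅ x ∈ F, I₁ n x) := by
  by_cases hFne : (F ∩ Set.Ici (0:ℝ)).Nonempty
  · set s : Set ℝ := (fun x => (x - ((n:ℝ)-1))^2/4) '' (F ∩ Set.Ici 0) with hs
    have hs_ne : s.Nonempty := hFne.image _
    have hs_bdd : BddBelow s := ⟨0, by rintro y ⟨x, hx', rfl⟩; positivity⟩
    set I : ℝ := sInf s with hIdef
    have hI0 : 0 ≤ I := le_csInf hs_ne (by rintro y ⟨x, hx', rfl⟩; positivity)
    have hq : ∀ t : ℝ, 1 ≤ t → ∀ η : ℝ, 0 < η → η / t ∈ F →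
        t * I ≤ (η - ((n:ℝ)-1)*t)^2/(4*t) := by
      intro t ht η hη hηF
      have ht0 : (0:ℝ) < t := by positivity
      have hx : η/t ∈ F ∩ Set.Ici 0 := ⟨hηF, (div_pos hη ht0).le⟩
      have h1 : I ≤ (η/t - ((n:ℝ)-1))^2/4 := csInf_le hs_bdd (Set.mem_image_of_mem _ hx)
      have h2 : (η - ((n:ℝ)-1)*t)^2/(4*t) = t * ((η/t - ((n:ℝ)-1))^2/4) := by
        field_simp
      rw [h2]
      exact mul_le_mul_of_nonneg_left h1 ht0.le
    have hseq : Tendsto (fun k : ℕ =>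
        ((1/((k:ℝ)+1))*(n:ℝ) - (1-1/((k:ℝ)+1))*I : ℝ)) atTop (nhds (-I)) := by
      have h0 : Tendsto (fun k : ℕ => 1/((k:ℝ)+1)) atTop (nhds 0) := tendsto_one_div_add_atTop_nhds_zero_nat
      have := (h0.mul_const (n:ℝ)).sub (((tendsto_const_nhds (x := (1:ℝ))).sub h0).mul_const I)
      simpa using this
    have hlimsup : Filter.limsup
        (fun t : ℝ => ((t⁻¹ : ℝ) : EReal) *
          ENNReal.log (∫⁻ η in {η : ℝ | 0 < η ∧ η / t ∈ F}, ENNReal.ofReal (p η t)))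
        Filter.atTop ≤ ((-I : ℝ) : EReal) := by
      apply ge_of_tendsto (EReal.tendsto_coe.2 hseq)
      apply Eventually.of_forall
      intro k
      have hk1 : (0:ℝ) < 1/((k:ℝ)+1) := by positivity
      have hk2 : 1/((k:ℝ)+1) ≤ 1 := by
        rw [div_le_one (by positivity)]
        have : (0:ℝ) ≤ (k:ℝ) := k.cast_nonneg
        linarith
      exact master n hn d hd p hp_le F hF I _ hI0 hk1 hk2 hq
    have hInf : (⨅ x ∈ F, I₁ n x) ≤ ((I : ℝ) : EReal) := by
      by_contra h
      push_neg at h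
      obtain ⟨c, hc1, hc2⟩ := EReal.exists_between_coe_real h
      have hcI : I < c := by exact_mod_cast hc1
      have : c ≤ I := by
        rw [hIdef]
        apply le_csInf hs_ne
        rintro y ⟨x, hx', rfl⟩
        have h3 : ((c:ℝ) : EReal) < I₁ n x := lt_of_lt_of_le hc2 (iInf₂_le x hx'.1)
        rw [I₁, if_pos (show (0:ℝ) ≤ x from hx'.2)] at h3
        show c ≤ (x - ((n:ℝ)-1))^2/4
        exact_mod_cast h3.le
      linarith
    refine le_trans hlimsup ?_
    rw [show ((-I : ℝ) : EReal) = -((I:ℝ):EReal) from EReal.coe_neg I]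
    exact EReal.neg_le_neg_iff.2 hInf
  · refine le_trans (limsup_le_of_le (by isBoundedDefault) ?_) bot_le
    filter_upwards [eventually_gt_atTop (0:ℝ)] with t ht
    have hempty : {η : ℝ | 0 < η ∧ η / t ∈ F} = ∅ := by
      ext η
      simp only [Set.mem_setOf_eq, Set.mem_empty_iff_false, iff_false, not_and]
      intro hη hηF
      exact hFne ⟨η/t, hηF, (div_pos hη ht).le⟩
    rw [hempty]
    simp only [Measure.restrict_empty, lintegral_zero_measure, ENNReal.log_zero]
    rw [EReal.mul_bot_of_pos]
    exact_mod_cast inv_pos.2 ht
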